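/- Let H, E, F be the linear endomorphisms of ℝ² (i.e. Fin 2 → ℝ) given by the matrices !![1, 0; 0, −1], !![0, 1; 0, 0], !![0, 0; 1, 0] respectively (the standard representation of sl₂). For a bilinear form B on ℝ², define Ř X Y Z W := (1/2) * (B (H X) Y) * (B (H Z) W) + (B (E X) Y) * (B (F Z) W) + (B (F X) Y) * (B (E Z) W), the lowered weight tensor of the Casimir ½H⊗H + E⊗F + F⊗E. Then for every nondegenerate symmetric bilinear form B on ℝ² the tensor Ř fails to be skew-symmetric in its first two arguments: there exist X, Y, Z, W ∈ ℝ² with Ř X Y Z W ≠ − Ř Y X Z W. (Example 11: the weight tensor of the standard representation of sl₂ does not have curvature symmetries and hence cannot be realized on a symmetric space.) -/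
import Mathlib


/-- The standard generators of sl₂ acting on ℝ². -/
noncomputable def sl2H : Module.End ℝ (Fin 2 → ℝ) := Matrix.toLin' !![1, 0; 0, -1]
noncomputable def sl2E : Module.End ℝ (Fin 2 → ℝ) := Matrix.toLin' !![0, 1; 0, 0]
noncomputable def sl2F : Module.End ℝ (Fin 2 → ℝ) := Matrix.toLin' !![0, 0; 1, 0]

/-- The lowered weight tensor of the Casimir ½H⊗H + E⊗F + F⊗E of sl₂ in its standard
representation. -/
noncomputable def sl2Rcheck (B : (Fin 2 → ℝ) →ₗ[ℝ] (Fin 2 → ℝ) →ₗ[ℝ] ℝ)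
    (X Y Z W : Fin 2 → ℝ) : ℝ :=
  (1/2) * (B (sl2H X) Y) * (B (sl2H Z) W)
    + (B (sl2E X) Y) * (B (sl2F Z) W) + (B (sl2F X) Y) * (B (sl2E Z) W)

/-- Example 11: for no nondegenerate symmetric bilinear form on ℝ² is the lowered weight
tensor of the standard representation of sl₂ skew-symmetric in its first two arguments;
hence this weight tensor cannot be realized on a symmetric space. -/
theorem sl2_weight_tensor_not_skew
    (B : (Fin 2 → ℝ) →ₗ[ℝ] (Fin 2 → ℝ) →ₗ[ℝ] ℝ)
    (hBsymm : ∀ X Y, B X Y = B Y X)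
    (hBnd : ∀ X, (∀ Y, B X Y = 0) → X = 0) :
    ∃ X Y Z W : Fin 2 → ℝ, sl2Rcheck B X Y Z W ≠ - sl2Rcheck B Y X Z W := by
  have simps : True := trivial
  set e0 : Fin 2 → ℝ := ![1,0] with he0
  set e1 : Fin 2 → ℝ := ![0,1] with he1
  have hH0 : sl2H e0 = e0 := by
    funext i; fin_cases i <;>
      simp [sl2H, he0, Matrix.toLin'_apply, Matrix.mulVec, dotProduct, Fin.sum_univ_two]
  have hH1 : sl2H e1 = -e1 := by
    funext i; fin_cases i <;>
      simp [sl2H, he1, Matrix.toLin'_apply, Matrix.mulVec, dotProduct, Fin.sum_univ_two]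
  have hE0 : sl2E e0 = 0 := by
    funext i; fin_cases i <;>
      simp [sl2E, he0, Matrix.toLin'_apply, Matrix.mulVec, dotProduct, Fin.sum_univ_two]
  have hE1 : sl2E e1 = e0 := by
    funext i; fin_cases i <;>
      simp [sl2E, he0, he1, Matrix.toLin'_apply, Matrix.mulVec, dotProduct, Fin.sum_univ_two]
  have hF0 : sl2F e0 = e1 := by
    funext i; fin_cases i <;>
      simp [sl2F, he0, he1, Matrix.toLin'_apply, Matrix.mulVec, dotProduct, Fin.sum_univ_two]
  have hF1 : sl2F e1 = 0 := by
    funext i; fin_cases i <;>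
      simp [sl2F, he1, Matrix.toLin'_apply, Matrix.mulVec, dotProduct, Fin.sum_univ_two]
  by_cases ha : B e0 e0 = 0
  · by_cases hd : B e1 e1 = 0
    · -- then B e0 e1 ≠ 0
      have hb : B e0 e1 ≠ 0 := by
        intro hb
        have h0 : e0 = 0 := by
          apply hBnd
          intro Y
          have hY : Y = Y 0 • e0 + Y 1 • e1 := by
            funext i; fin_cases i <;> simp [he0, he1]
          rw [hY]
          simp [ha, hb]
        have := congrFun h0 0
        simp [he0] at this
      refine ⟨e1, e1, e0, e0, ?_⟩
      simp only [sl2Rcheck, hH0, hH1, hE1, hF0, hF1, map_zero, map_neg,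
        LinearMap.zero_apply, LinearMap.neg_apply]
      rw [hBsymm e1 e0] at *
      intro h
      rw [ha, hd] at h
      nlinarith [sq_nonneg (B e0 e1), sq_pos_of_ne_zero hb]
    · refine ⟨e1, e1, e1, e1, ?_⟩
      simp only [sl2Rcheck, hH1, hE1, hF1, map_zero, map_neg,
        LinearMap.zero_apply, LinearMap.neg_apply]
      intro h
      nlinarith [sq_pos_of_ne_zero hd]
  · refine ⟨e0, e0, e0, e0, ?_⟩
    simp only [sl2Rcheck, hH0, hE0, hF0, map_zero,
      LinearMap.zero_apply]
    intro h
    nlinarith [sq_pos_of_ne_zero ha]
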